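/- arXiv:1907.12519 — 2 statements merged into one kernel-verified Lean document; each statement's English description precedes it below -/
import Mathlib

section
/- Let S, A, C, c, R > 0 and n ≥ 3 a natural number. Suppose h₀ > 0 satisfies h₀ ≤ c·R/(2C) and B·h₀^(n−2) ≤ A/2 where B = C^n·(n−1)^(n−1)/(n^n·c^(n−1)). Then for all h with 0 ≤ h ≤ h₀ and all t with 0 ≤ t ≤ R: 2S − A·h² + C·h·t^(n−1) − c·t^n ≤ 2S − (A/2)·h², and moreover at t = R: 2S − A·h² + C·h·R^(n−1) − c·R^n ≤ 2S − (c/2)·R^n. -/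
/-- Weighted AM-GM consequence: for `2 ≤ n` and nonnegative `a b`,
`a ^ (1/n) * b ^ ((n-1)/n) ≤ (1/n) * a + ((n-1)/n) * b`. -/
lemma young_aux (n : ℕ) (hn : 2 ≤ n) {a b : ℝ} (ha : 0 ≤ a) (hb : 0 ≤ b) :
    a ^ ((1 : ℝ) / n) * b ^ (((n : ℝ) - 1) / n) ≤ (1 / n) * a + (((n : ℝ) - 1) / n) * b := by
  have hn0 : (0 : ℝ) < n := by positivity
  have h1 : (0 : ℝ) ≤ 1 / n := by positivity
  have h2 : (0 : ℝ) ≤ ((n : ℝ) - 1) / n := by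
    apply div_nonneg _ hn0.le
    have : (2 : ℝ) ≤ n := by exact_mod_cast hn
    linarith
  exact Real.geom_mean_le_arith_mean2_weighted h1 h2 ha hb (by field_simp; ring)

theorem stmt_4 (n : ℕ) (hn : 3 ≤ n) (S A C c R h₀ : ℝ)
    (hS : 0 < S) (hA : 0 < A) (hC : 0 < C) (hc : 0 < c) (hR : 0 < R) (hh₀ : 0 < h₀)
    (h₀le : h₀ ≤ c * R / (2 * C))
    (hB : (C ^ n * ((n : ℝ) - 1) ^ (n - 1) / ((n : ℝ) ^ n * c ^ (n - 1))) * h₀ ^ (n - 2) ≤ A / 2) :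
    ∀ h : ℝ, 0 ≤ h → h ≤ h₀ →
      (∀ t : ℝ, 0 ≤ t → t ≤ R →
        2 * S - A * h ^ 2 + C * h * t ^ (n - 1) - c * t ^ n ≤ 2 * S - (A / 2) * h ^ 2) ∧
      2 * S - A * h ^ 2 + C * h * R ^ (n - 1) - c * R ^ n ≤ 2 * S - (c / 2) * R ^ n := by
  intro h hh0 hhle
  set B : ℝ := C ^ n * ((n : ℝ) - 1) ^ (n - 1) / ((n : ℝ) ^ n * c ^ (n - 1)) with hBdef
  have hn0 : (0 : ℝ) < n := by positivity
  have hn3 : (3 : ℝ) ≤ n := by exact_mod_cast hn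
  have hn1 : (0 : ℝ) < (n : ℝ) - 1 := by linarith
  have hBpos : 0 < B := by
    apply div_pos (mul_pos (pow_pos hC n) (pow_pos hn1 _))
      (mul_pos (pow_pos hn0 n) (pow_pos hc _))
  have hnn : (((n - 1 : ℕ) : ℝ)) = (n : ℝ) - 1 := by
    have : 1 ≤ n := by omega
    push_cast [this]
    ring
  -- key Young-type inequality
  have hkey : ∀ t : ℝ, 0 ≤ t → C * h * t ^ (n - 1) ≤ B * h ^ n + c * t ^ n := by
    intro t ht
    set a : ℝ := (n : ℝ) * B * h ^ n with hadef
    set b : ℝ := (n : ℝ) / ((n : ℝ) - 1) * c * t ^ n with hbdef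
    have ha : 0 ≤ a := by positivity
    have hb : 0 ≤ b := by
      apply mul_nonneg (mul_nonneg (div_nonneg hn0.le hn1.le) hc.le) (pow_nonneg ht n)
    have hAM := young_aux n (by omega) ha hb
    have hRHS : (1 / (n : ℝ)) * a + (((n : ℝ) - 1) / n) * b = B * h ^ n + c * t ^ n := by
      rw [hadef, hbdef]
      field_simp
    have hLHS : a ^ ((1 : ℝ) / n) * b ^ (((n : ℝ) - 1) / n) = C * h * t ^ (n - 1) := by
      have hconst1 : (0 : ℝ) ≤ (n : ℝ) * B := by positivity
      have hconst2 : (0 : ℝ) ≤ (n : ℝ) / ((n : ℝ) - 1) * c :=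
        mul_nonneg (div_nonneg hn0.le hn1.le) hc.le
      have hhn : 0 ≤ h ^ n := pow_nonneg hh0 n
      have htn : 0 ≤ t ^ n := pow_nonneg ht n
      rw [hadef, hbdef, Real.mul_rpow hconst1 hhn, Real.mul_rpow hconst2 htn]
      have e1 : (h ^ n) ^ ((1 : ℝ) / n) = h := by
        rw [← Real.rpow_natCast h n, ← Real.rpow_mul hh0]
        rw [mul_one_div, div_self (ne_of_gt hn0), Real.rpow_one]
      have e2 : (t ^ n) ^ (((n : ℝ) - 1) / n) = t ^ (n - 1) := by
        rw [← Real.rpow_natCast t n, ← Real.rpow_mul ht]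
        rw [show (n : ℝ) * (((n : ℝ) - 1) / n) = (n : ℝ) - 1 by field_simp, ← hnn,
          Real.rpow_natCast]
      rw [e1, e2]
      have e3 : ((n : ℝ) / ((n : ℝ) - 1) * c) ^ (((n : ℝ) - 1) / n)
          = (((n : ℝ) / ((n : ℝ) - 1) * c) ^ (n - 1)) ^ ((1 : ℝ) / n) := by
        rw [← Real.rpow_natCast ((n : ℝ) / ((n : ℝ) - 1) * c) (n - 1),
          ← Real.rpow_mul hconst2, hnn, mul_one_div]
      rw [e3]
      have e4 : (n : ℝ) * B * ((n : ℝ) / ((n : ℝ) - 1) * c) ^ (n - 1) = C ^ n := by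
        rw [hBdef]
        have hpow : (n : ℝ) ^ n = (n : ℝ) ^ (n - 1) * n := by
          rw [← pow_succ]
          congr 1
          omega
        rw [mul_pow, div_pow, hpow]
        field_simp
      have hK : ((n : ℝ) * B) ^ ((1 : ℝ) / n)
          * (((n : ℝ) / ((n : ℝ) - 1) * c) ^ (n - 1)) ^ ((1 : ℝ) / n) = C := by
        rw [← Real.mul_rpow hconst1 (pow_nonneg hconst2 _), e4,
          ← Real.rpow_natCast C n, ← Real.rpow_mul hC.le, mul_one_div,
          div_self (ne_of_gt hn0), Real.rpow_one]
      linear_combination h * t ^ (n - 1) * hK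
    rw [hRHS, hLHS] at hAM
    exact hAM
  -- bound B * h ^ n ≤ (A/2) * h ^ 2
  have hBh : B * h ^ n ≤ A / 2 * h ^ 2 := by
    have hsplit : h ^ n = h ^ (n - 2) * h ^ 2 := by
      rw [← pow_add]
      congr 1
      omega
    have h1 : B * h ^ (n - 2) ≤ B * h₀ ^ (n - 2) :=
      mul_le_mul_of_nonneg_left (pow_le_pow_left₀ hh0 hhle _) hBpos.le
    have h2 : B * h ^ (n - 2) ≤ A / 2 := le_trans h1 hB
    calc B * h ^ n = (B * h ^ (n - 2)) * h ^ 2 := by rw [hsplit]; ring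
      _ ≤ A / 2 * h ^ 2 := mul_le_mul_of_nonneg_right h2 (sq_nonneg h)
  constructor
  · intro t ht htR
    have := hkey t ht
    linarith
  · -- at t = R use h ≤ cR/(2C)
    have hCh : C * h ≤ c * R / 2 := by
      have := mul_le_mul_of_nonneg_left hhle hC.le
      calc C * h ≤ C * (c * R / (2 * C)) := mul_le_mul_of_nonneg_left h₀le hC.le |>.trans_eq rfl |> (le_trans this)
        _ = c * R / 2 := by field_simp
    have hRn1 : (0 : ℝ) ≤ R ^ (n - 1) := pow_nonneg hR.le _
    have hRsplit : R ^ n = R * R ^ (n - 1) := by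
      rw [← pow_succ']
      congr 1
      omega
    have : C * h * R ^ (n - 1) ≤ c * R / 2 * R ^ (n - 1) :=
      mul_le_mul_of_nonneg_right hCh hRn1
    have hA2 : 0 ≤ A * h ^ 2 := by positivity
    nlinarith [this, hRsplit]
end

section
/- Let n ≥ 3, S, κ > 0. There exist δ₀ > 0, R > 0, and positive constants such that defining F(h, t) = 2·cos(√κ·h)^n·S + C·h·t^(n−1) − c·t^n for given C, c > 0, one has: (i) F(δ₀, t) < 2S for all t ∈ [0, R]; (ii) F(h, R) < 2S for all h ∈ [0, δ₀]; (iii) 2·cos(√κ·r)^n·S < 2S for all r ∈ (0, δ₀]. Hence sup over the three parameter ranges of the corresponding quantities is strictly less than 2S. -/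
set_option maxHeartbeats 800000

lemma one_sub_cos_ge {y : ℝ} (h0 : 0 < y) (h1 : y ≤ 1) :
    y ^ 2 / 3 ≤ 1 - Real.cos y := by
  have hs : y / 2 - (y / 2) ^ 3 / 4 < Real.sin (y / 2) := by
    have := Real.sin_gt_sub_cube (by positivity : 0 < y / 2)
    have : 0 ≤ (y / 2) ^ 3 := by positivity
    linarith
  have hcos : Real.cos y = 1 - 2 * Real.sin (y / 2) ^ 2 := by
    have h2 := Real.cos_two_mul (y / 2)
    have h3 := Real.sin_sq_add_cos_sq (y / 2)
    rw [show 2 * (y / 2) = y by ring] at h2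
    nlinarith
  have h3 : y ^ 3 ≤ y := by
    nlinarith [mul_nonneg h0.le (sub_nonneg.mpr h1),
      mul_nonneg (mul_nonneg h0.le h0.le) (sub_nonneg.mpr h1)]
  have hpos : 0 ≤ y / 2 - (y / 2) ^ 3 / 4 := by
    have he : (y / 2) ^ 3 / 4 = y ^ 3 / 32 := by ring
    rw [he]; linarith
  have hsq := mul_self_le_mul_self hpos hs.le
  nlinarith [sq_nonneg (y * (1 - y)), sq_nonneg y, mul_nonneg (mul_nonneg h0.le h0.le) h0.le]

theorem stmt_15 (n : ℕ) (hn : 3 ≤ n) (S κ : ℝ) (hS : 0 < S) (hκ : 0 < κ)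
    (C c : ℝ) (hC : 0 < C) (hc : 0 < c) :
    ∃ δ₀ > (0 : ℝ), ∃ R > (0 : ℝ),
      (∀ t ∈ Set.Icc (0 : ℝ) R,
        2 * Real.cos (Real.sqrt κ * δ₀) ^ n * S + C * δ₀ * t ^ (n - 1) - c * t ^ n < 2 * S) ∧
      (∀ h ∈ Set.Icc (0 : ℝ) δ₀,
        2 * Real.cos (Real.sqrt κ * h) ^ n * S + C * h * R ^ (n - 1) - c * R ^ n < 2 * S) ∧
      (∀ r ∈ Set.Ioc (0 : ℝ) δ₀, 2 * Real.cos (Real.sqrt κ * r) ^ n * S < 2 * S) := by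
  set x := Real.sqrt κ with hxdef
  have hx : 0 < x := Real.sqrt_pos.mpr hκ
  have hx2 : x ^ 2 = κ := Real.sq_sqrt hκ.le
  set K : ℝ := 2 * S * κ * c ^ (n - 1) / (3 * C ^ n) with hKdef
  have hK : 0 < K := by positivity
  set δ₀ : ℝ := min (min 1 x⁻¹) (min (c / (2 * C)) (K / 2)) with hδdef
  have hδpos : 0 < δ₀ := by positivity
  have hδ1 : δ₀ ≤ 1 := le_trans (min_le_left _ _) (min_le_left _ _)
  have hδx : δ₀ ≤ x⁻¹ := le_trans (min_le_left _ _) (min_le_right _ _)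
  have hδc : δ₀ ≤ c / (2 * C) := le_trans (min_le_right _ _) (min_le_left _ _)
  have hδK : δ₀ ≤ K / 2 := le_trans (min_le_right _ _) (min_le_right _ _)
  have hxδ : x * δ₀ ≤ 1 := by
    rw [← mul_inv_cancel₀ hx.ne']
    exact mul_le_mul_of_nonneg_left hδx hx.le
  -- cos bounds helper
  have hcosmem : ∀ y : ℝ, 0 ≤ y → y ≤ 1 → 0 ≤ Real.cos y ∧ Real.cos y ≤ 1 := by
    intro y hy0 hy1
    constructor
    · apply Real.cos_nonneg_of_mem_Icc
      constructor <;> nlinarith [Real.pi_gt_three]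
    · exact Real.cos_le_one y
  refine ⟨δ₀, hδpos, 1, one_pos, ?_, ?_, ?_⟩
  · -- (i)
    intro t ht
    obtain ⟨ht0, ht1⟩ := ht
    obtain ⟨hu0, hu1⟩ := hcosmem (x * δ₀) (by positivity) hxδ
    set u := Real.cos (x * δ₀) with hu
    have hun : u ^ n ≤ u := by
      calc u ^ n ≤ u ^ 1 := pow_le_pow_of_le_one hu0 hu1 (by omega)
      _ = u := pow_one u
    have hgap : (x * δ₀) ^ 2 / 3 ≤ 1 - u := one_sub_cos_ge (by positivity) hxδ
    have hgap' : κ * δ₀ ^ 2 / 3 ≤ 1 - u := by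
      rw [mul_pow, hx2] at hgap; exact hgap
    -- bound the polynomial part
    obtain ⟨m, hm⟩ : ∃ m, n = m + 1 := ⟨n - 1, by omega⟩
    have hnm : n - 1 = m := by omega
    have hpoly : C * δ₀ * t ^ (n - 1) - c * t ^ n < 2 * S * (κ * δ₀ ^ 2 / 3) := by
      have hrhs : 0 < 2 * S * (κ * δ₀ ^ 2 / 3) := by positivity
      by_cases hct : c * t ≤ C * δ₀
      · -- t ≤ Cδ₀/c
        have htle : t ≤ C * δ₀ / c := by
          rw [le_div_iff₀ hc]; linarith
        have h1 : t ^ m ≤ (C * δ₀ / c) ^ m := pow_le_pow_left₀ ht0 htle m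
        have hfac : C * δ₀ * t ^ (n - 1) - c * t ^ n ≤ (C * δ₀ / c) ^ m * (C * δ₀) := by
          rw [hnm, hm, pow_succ]
          have : C * δ₀ * t ^ m - c * (t ^ m * t) = t ^ m * (C * δ₀ - c * t) := by ring
          rw [this]
          have h2 : t ^ m * (C * δ₀ - c * t) ≤ (C * δ₀ / c) ^ m * (C * δ₀ - c * t) := by
            apply mul_le_mul_of_nonneg_right h1 (by linarith)
          have h3 : (C * δ₀ / c) ^ m * (C * δ₀ - c * t) ≤ (C * δ₀ / c) ^ m * (C * δ₀) := by
            apply mul_le_mul_of_nonneg_left (by nlinarith) (by positivity)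
          linarith
        have hkey : (C * δ₀ / c) ^ m * (C * δ₀) < 2 * S * (κ * δ₀ ^ 2 / 3) := by
          -- equals C^n δ₀^n / c^m ; use δ₀^(m-1) < K
          have hm1 : 1 ≤ m := by omega
          have hδn : δ₀ ^ (m - 1) < K := by
            calc δ₀ ^ (m - 1) ≤ δ₀ ^ 1 := pow_le_pow_of_le_one hδpos.le hδ1 (by omega)
            _ = δ₀ := pow_one δ₀
            _ ≤ K / 2 := hδK
            _ < K := by linarith
          have hsplit : δ₀ ^ m * δ₀ = δ₀ ^ (m - 1) * δ₀ ^ 2 := by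
            rw [← pow_succ, ← pow_add]
            congr 1
            omega
          have hKval : K * (3 * C ^ n) = 2 * S * κ * c ^ (n - 1) := by
            rw [hKdef]
            field_simp
          rw [div_pow, mul_pow, div_mul_eq_mul_div, div_lt_iff₀ (by positivity : (0:ℝ) < c ^ m)]
          have e1 : C ^ m * δ₀ ^ m * (C * δ₀) = C ^ n * (δ₀ ^ (m-1) * δ₀ ^ 2) := by
            rw [← hsplit, hm]; ring
          rw [e1]
          have e2 : 2 * S * (κ * δ₀ ^ 2 / 3) * c ^ m = (2 * S * κ * c ^ (n-1)) * δ₀ ^ 2 / 3 := by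
            rw [hnm]; ring
          rw [e2, ← hKval]
          have : C ^ n * (δ₀ ^ (m - 1) * δ₀ ^ 2) < C ^ n * (K * δ₀ ^ 2) := by
            apply mul_lt_mul_of_pos_left _ (by positivity)
            exact mul_lt_mul_of_pos_right hδn (by positivity)
          calc C ^ n * (δ₀ ^ (m-1) * δ₀ ^ 2) < C ^ n * (K * δ₀ ^ 2) := this
          _ = K * (3 * C ^ n) * δ₀ ^ 2 / 3 := by ring
        linarith
      · -- c t > C δ₀ : LHS ≤ 0
        push_neg at hct
        have : C * δ₀ * t ^ (n - 1) - c * t ^ n ≤ 0 := by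
          rw [hnm, hm, pow_succ]
          have : C * δ₀ * t ^ m - c * (t ^ m * t) = t ^ m * (C * δ₀ - c * t) := by ring
          rw [this]
          apply mul_nonpos_of_nonneg_of_nonpos (pow_nonneg ht0 m) (by linarith)
        linarith
    nlinarith [mul_le_mul_of_nonneg_left hun (by linarith : (0:ℝ) ≤ 2 * S),
      mul_le_mul_of_nonneg_left hgap' (by linarith : (0:ℝ) ≤ 2 * S)]
  · -- (ii)
    intro h hh
    obtain ⟨hh0, hh1⟩ := hh
    have hxh : x * h ≤ 1 := by
      calc x * h ≤ x * δ₀ := mul_le_mul_of_nonneg_left hh1 hx.le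
      _ ≤ 1 := hxδ
    obtain ⟨hu0, hu1⟩ := hcosmem (x * h) (by positivity) hxh
    have hun : Real.cos (x * h) ^ n ≤ 1 := pow_le_one₀ hu0 hu1
    have hCc : C * (c / (2 * C)) = c / 2 := by field_simp
    have hδc' : C * h ≤ c / 2 := by
      calc C * h ≤ C * δ₀ := mul_le_mul_of_nonneg_left hh1 hC.le
      _ ≤ C * (c / (2 * C)) := mul_le_mul_of_nonneg_left hδc hC.le
      _ = c / 2 := hCc
    have h5 : Real.cos (x * h) ^ n * S ≤ 1 * S :=
      mul_le_mul_of_nonneg_right hun hS.le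
    rw [one_pow, one_pow]
    linarith
  · -- (iii)
    intro r hr
    obtain ⟨hr0, hr1⟩ := hr
    have hxr : x * r ≤ 1 := by
      calc x * r ≤ x * δ₀ := mul_le_mul_of_nonneg_left hr1 hx.le
      _ ≤ 1 := hxδ
    obtain ⟨hu0, _⟩ := hcosmem (x * r) (by positivity) hxr
    have hlt : Real.cos (x * r) < 1 := by
      have h8 := one_sub_cos_ge (by positivity : 0 < x * r) hxr
      have h9 : 0 < (x * r) ^ 2 := by positivity
      linarith
    have h6 : Real.cos (x * r) ^ n < 1 := pow_lt_one₀ hu0 hlt (by omega)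
    have h7 : Real.cos (x * r) ^ n * S < 1 * S :=
      mul_lt_mul_of_pos_right h6 hS
    linarith
end
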